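/- Let F be the free group on two generators x and y. For an integer k, the power ⁅x, y⁆^k lies in the third term γ₃(F) of the lower central series of F if and only if k = 0. -/

import Mathlib

open scoped commutatorElement

/-- The integer Heisenberg group. -/
structure Heis where
  a : ℤ
  b : ℤ
  c : ℤ

namespace Heis

@[ext] theorem ext' {p q : Heis} (ha : p.a = q.a) (hb : p.b = q.b) (hc : p.c = q.c) :
    p = q := by cases p; cases q; simp_all

instance : Mul Heis := ⟨fun p q => ⟨p.a + q.a, p.b + q.b, p.c + q.c + p.a * q.b⟩⟩
instance : One Heis := ⟨⟨0, 0, 0⟩⟩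
instance : Inv Heis := ⟨fun p => ⟨-p.a, -p.b, -p.c + p.a * p.b⟩⟩

@[simp] theorem mul_a (p q : Heis) : (p * q).a = p.a + q.a := rfl
@[simp] theorem mul_b (p q : Heis) : (p * q).b = p.b + q.b := rfl
@[simp] theorem mul_c (p q : Heis) : (p * q).c = p.c + q.c + p.a * q.b := rfl
@[simp] theorem one_a : (1 : Heis).a = 0 := rfl
@[simp] theorem one_b : (1 : Heis).b = 0 := rfl
@[simp] theorem one_c : (1 : Heis).c = 0 := rfl
@[simp] theorem inv_a (p : Heis) : p⁻¹.a = -p.a := rfl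
@[simp] theorem inv_b (p : Heis) : p⁻¹.b = -p.b := rfl
@[simp] theorem inv_c (p : Heis) : p⁻¹.c = -p.c + p.a * p.b := rfl

instance : Group Heis where
  mul_assoc p q r := by ext <;> simp <;> ring
  one_mul p := by ext <;> simp
  mul_one p := by ext <;> simp
  inv_mul_cancel p := by ext <;> simp

/-- Elements with vanishing `a`, `b` components. -/
def S : Subgroup Heis where
  carrier := {p | p.a = 0 ∧ p.b = 0}
  mul_mem' := by rintro p q ⟨h1, h2⟩ ⟨h3, h4⟩; simp_all
  one_mem' := by simp
  inv_mem' := by rintro p ⟨h1, h2⟩; simp_all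

theorem lcs2_le_S : Subgroup.lowerCentralSeries (⊤ : Subgroup Heis) 1 ≤ S := by
  rw [show Subgroup.lowerCentralSeries (⊤ : Subgroup Heis) 1 = ⁅Subgroup.lowerCentralSeries (⊤ : Subgroup Heis) 0, ⊤⁆ from rfl,
    Subgroup.commutator_le]
  intro g _ h _
  constructor <;> simp [commutatorElement_def]

theorem lcs3_eq_bot : Subgroup.lowerCentralSeries (⊤ : Subgroup Heis) 2 = ⊥ := by
  rw [show Subgroup.lowerCentralSeries (⊤ : Subgroup Heis) 2 = ⁅Subgroup.lowerCentralSeries (⊤ : Subgroup Heis) 1, ⊤⁆ from rfl, eq_bot_iff,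
    Subgroup.commutator_le]
  intro g hg h _
  obtain ⟨h1, h2⟩ := lcs2_le_S hg
  have : ⁅g, h⁆ = 1 := by
    ext <;> simp [commutatorElement_def, h1, h2]
  simp [this]

/-- The central element, embedded as a hom from `Multiplicative ℤ`. -/
def z : Multiplicative ℤ →* Heis where
  toFun k := ⟨0, 0, Multiplicative.toAdd k⟩
  map_one' := by ext <;> simp
  map_mul' p q := by ext <;> simp

end Heis

/-- Let `F` be the free group on two generators `x` and `y`.  For an integer `k`,
the power `⁅x, y⁆ ^ k` lies in the third term `γ₃(F) = lowerCentralSeries F 2` of the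
lower central series of `F` if and only if `k = 0`. -/
theorem commutator_zpow_mem_lcs3_iff_eq_zero (k : ℤ)
    (x y : FreeGroup (Fin 2)) (hx : x = FreeGroup.of 0) (hy : y = FreeGroup.of 1) :
    ⁅x, y⁆ ^ k ∈ Subgroup.lowerCentralSeries (⊤ : Subgroup (FreeGroup (Fin 2))) 2 ↔ k = 0 := by
  constructor
  · intro hmem
    set X : Heis := ⟨1, 0, 0⟩
    set Y : Heis := ⟨0, 1, 0⟩
    let φ : FreeGroup (Fin 2) →* Heis := FreeGroup.lift (fun i => if i = 0 then X else Y)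
    have hφ : φ (⁅x, y⁆ ^ k) ∈ Subgroup.lowerCentralSeries (⊤ : Subgroup Heis) 2 :=
      Subgroup.lowerCentralSeries.map φ 2 ⟨_, hmem, rfl⟩
    rw [Heis.lcs3_eq_bot, Subgroup.mem_bot] at hφ
    have hXY : φ ⁅x, y⁆ = ⁅X, Y⁆ := by
      rw [hx, hy]
      simp [φ, commutatorElement_def]
    have hcomm : ⁅X, Y⁆ = Heis.z (Multiplicative.ofAdd 1) := by
      ext <;> simp [commutatorElement_def, Heis.z, X, Y]
    have : Heis.z (Multiplicative.ofAdd k) = 1 := by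
      rw [show Multiplicative.ofAdd k = (Multiplicative.ofAdd (1 : ℤ)) ^ k by
          simp [← ofAdd_zsmul], map_zpow, ← hcomm, ← hXY, ← map_zpow, hφ]
    have := congrArg Heis.c this
    simpa [Heis.z] using this
  · rintro rfl
    simpa using Subgroup.one_mem _
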